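/- Assume f is L_f-Lipschitz on X × Y, f̃*_hi = sup_{x∈X} f̃*(x) is finite, the error-bound assumption holds with constants θ̄ > 0 and function ω, μ ≥ (f̃*_hi − f̃_low)/θ̄², and the penalized bilevel problem attains its optimal value f*_μ at some feasible point. Let ρ, ε > 0, and let (xε, yε, zε) ∈ X × Y × Y be an ε-optimal solution of the minimax problem min_{(x,y)∈X×Y} max_{z∈Y} P_{ρ,μ}(x,y,z). Then: (i) f(xε,yε) ≤ f* + L_f ω(√(μ⁻¹(f̃*_hi − f̃_low))) + 2ε; (ii) f̃(xε,yε) ≤ f̃*(xε) + ρ⁻¹( f* − f_low + L_f ω(√(μ⁻¹(f̃*_hi − f̃_low))) + 2ε ); and (iii) ‖[g̃(xε,yε)]₊‖² ≤ μ⁻¹( f̃*(xε) − f̃_low + ρ⁻¹( f* − f_low + L_f ω(√(μ⁻¹(f̃*_hi − f̃_low))) + 2ε ) ). -/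

import Mathlib

noncomputable section

open Set

open scoped RealInnerProductSpace

/-- Euclidean space `ℝⁿ`. -/
abbrev En (n : ℕ) := EuclideanSpace ℝ (Fin n)

/-- Componentwise positive part `[v]₊` of a vector `v ∈ ℝˡ`. -/
def posPart {l : ℕ} (v : En l) : En l := WithLp.toLp 2 (fun i => max (v i) 0)

/-- The Euclidean distance `‖(x,y) − (x',y')‖` on `ℝⁿ × ℝᵐ`. -/
def prodDist {n m : ℕ} (p q : En n × En m) : ℝ :=
  Real.sqrt (‖p.1 - q.1‖ ^ 2 + ‖p.2 - q.2‖ ^ 2)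

/-- `φ` is `L`-Lipschitz on `X × Y` (with the Euclidean norm on `ℝⁿ × ℝᵐ`). -/
def LipOnXY {n m : ℕ} (φ : En n × En m → ℝ) (L : ℝ)
    (X : Set (En n)) (Y : Set (En m)) : Prop :=
  ∀ p ∈ X ×ˢ Y, ∀ q ∈ X ×ˢ Y, |φ p - φ q| ≤ L * prodDist p q

/-- The Slater condition with constant `G`. -/
def Slater {n m l : ℕ} (gt : En n × En m → En l) (X : Set (En n)) (Y : Set (En m))
    (G : ℝ) : Prop :=
  ∀ x ∈ X, ∃ zhat ∈ Y, ∀ i, gt (x, zhat) i ≤ -G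

/-- The lower-level value function `f̃*(x) = inf { f̃(x,z) : z ∈ Y, g̃(x,z) ≤ 0 }`. -/
def ftStar {n m l : ℕ} (ft : En n × En m → ℝ) (gt : En n × En m → En l)
    (Y : Set (En m)) (x : En n) : ℝ :=
  sInf {v | ∃ z ∈ Y, (∀ i, gt (x, z) i ≤ 0) ∧ v = ft (x, z)}

/-- `f̃*_hi = sup_{x ∈ X} f̃*(x)`. -/
def ftStarHi {n m l : ℕ} (ft : En n × En m → ℝ) (gt : En n × En m → En l)
    (X : Set (En n)) (Y : Set (En m)) : ℝ :=
  sSup {v | ∃ x ∈ X, v = ftStar ft gt Y x}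

/-- `f̃_low = inf { f̃(x,y) : (x,y) ∈ X × Y }`. -/
def ftLow {n m : ℕ} (ft : En n × En m → ℝ) (X : Set (En n)) (Y : Set (En m)) : ℝ :=
  sInf {v | ∃ x ∈ X, ∃ y ∈ Y, v = ft (x, y)}

/-- `f̃_hi = sup { f̃(x,y) : (x,y) ∈ X × Y }`. -/
def ftHi {n m : ℕ} (ft : En n × En m → ℝ) (X : Set (En n)) (Y : Set (En m)) : ℝ :=
  sSup {v | ∃ x ∈ X, ∃ y ∈ Y, v = ft (x, y)}

/-- `f_low = inf { f(x,y) : (x,y) ∈ X × Y }`. -/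
def fLow {n m : ℕ} (f : En n × En m → ℝ) (X : Set (En n)) (Y : Set (En m)) : ℝ :=
  sInf {v | ∃ x ∈ X, ∃ y ∈ Y, v = f (x, y)}

/-- `g̃_hi = sup { ‖g̃(x,y)‖ : (x,y) ∈ X × Y }`. -/
def gtHi {n m l : ℕ} (gt : En n × En m → En l) (X : Set (En n)) (Y : Set (En m)) : ℝ :=
  sSup {v | ∃ x ∈ X, ∃ y ∈ Y, v = ‖gt (x, y)‖}

/-- The lower-level penalty function `P̃_μ(x,z) = f̃(x,z) + μ ‖[g̃(x,z)]₊‖²`. -/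
def Ptilde {n m l : ℕ} (ft : En n × En m → ℝ) (gt : En n × En m → En l)
    (μ : ℝ) (x : En n) (z : En m) : ℝ :=
  ft (x, z) + μ * ‖posPart (gt (x, z))‖ ^ 2

/-- `inf_{z ∈ Y} P̃_μ(x,z)`. -/
def PtildeMinVal {n m l : ℕ} (ft : En n × En m → ℝ) (gt : En n × En m → En l)
    (Y : Set (En m)) (μ : ℝ) (x : En n) : ℝ :=
  sInf {w | ∃ z ∈ Y, w = Ptilde ft gt μ x z}

/-- The minimax penalty function `P_{ρ,μ}(x,y,z) = f(x,y) + ρ (P̃_μ(x,y) − P̃_μ(x,z))`. -/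
def Prhomu {n m l : ℕ} (f ft : En n × En m → ℝ) (gt : En n × En m → En l)
    (ρ μ : ℝ) (x : En n) (y z : En m) : ℝ :=
  f (x, y) + ρ * (Ptilde ft gt μ x y - Ptilde ft gt μ x z)

/-- `sup_{z ∈ Y} P_{ρ,μ}(x,y,z)`. -/
def maxPc {n m l : ℕ} (f ft : En n × En m → ℝ) (gt : En n × En m → En l)
    (Y : Set (En m)) (ρ μ : ℝ) (x : En n) (y : En m) : ℝ :=
  sSup {v | ∃ z ∈ Y, v = Prhomu f ft gt ρ μ x y z}

/-- `inf_{(x,y)∈X×Y} sup_{z∈Y} P_{ρ,μ}(x,y,z)`. -/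
def minimaxValc {n m l : ℕ} (f ft : En n × En m → ℝ) (gt : En n × En m → En l)
    (X : Set (En n)) (Y : Set (En m)) (ρ μ : ℝ) : ℝ :=
  sInf {v | ∃ x ∈ X, ∃ y ∈ Y, v = maxPc f ft gt Y ρ μ x y}

/-- `(x,y,z)` is an ε-optimal solution of `min_{(x,y)∈X×Y} max_{z∈Y} P_{ρ,μ}(x,y,z)`. -/
def epsOptimalc {n m l : ℕ} (f ft : En n × En m → ℝ) (gt : En n × En m → En l)
    (X : Set (En n)) (Y : Set (En m)) (ρ μ ε : ℝ) (x : En n) (y z : En m) : Prop :=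
  maxPc f ft gt Y ρ μ x y - Prhomu f ft gt ρ μ x y z ≤ ε ∧
  Prhomu f ft gt ρ μ x y z - minimaxValc f ft gt X Y ρ μ ≤ ε

/-- The constrained bilevel optimal value
`f* = inf { f(x,y) : x ∈ X, y ∈ Y, g̃(x,y) ≤ 0, f̃(x,y) = f̃*(x) }`. -/
def fStarC {n m l : ℕ} (f ft : En n × En m → ℝ) (gt : En n × En m → En l)
    (X : Set (En n)) (Y : Set (En m)) : ℝ :=
  sInf {v | ∃ x ∈ X, ∃ y ∈ Y,
    (∀ i, gt (x, y) i ≤ 0) ∧ ft (x, y) = ftStar ft gt Y x ∧ v = f (x, y)}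

/-- The penalized bilevel optimal value
`f*_μ = inf { f(x,y) : x ∈ X, y ∈ Y, P̃_μ(x,y) = inf_{z∈Y} P̃_μ(x,z) }`. -/
def fStarMu {n m l : ℕ} (f ft : En n × En m → ℝ) (gt : En n × En m → En l)
    (X : Set (En n)) (Y : Set (En m)) (μ : ℝ) : ℝ :=
  sInf {v | ∃ x ∈ X, ∃ y ∈ Y, Ptilde ft gt μ x y = PtildeMinVal ft gt Y μ x ∧ v = f (x, y)}

/-- The set `S_θ(x)` of θ-approximately feasible lower-level minimizers. -/
def Sθ {n m l : ℕ} (ft : En n × En m → ℝ) (gt : En n × En m → En l)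
    (Y : Set (En m)) (θ : ℝ) (x : En n) : Set (En m) :=
  {z | z ∈ Y ∧ ‖posPart (gt (x, z))‖ ≤ θ ∧
    ft (x, z) = sInf {w | ∃ z' ∈ Y, ‖posPart (gt (x, z'))‖ ≤ θ ∧ w = ft (x, z')}}

/-- The error-bound assumption with constants `θbar` and function `ω`. -/
def ErrorBound {n m l : ℕ} (ft : En n × En m → ℝ) (gt : En n × En m → En l)
    (X : Set (En n)) (Y : Set (En m)) (θbar : ℝ) (ω : ℝ → ℝ) : Prop :=
  0 < θbar ∧ (∀ t, 0 ≤ t → 0 ≤ ω t) ∧ (∀ a b, 0 ≤ a → a ≤ b → ω a ≤ ω b) ∧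
    Filter.Tendsto ω (nhdsWithin 0 (Set.Ioi 0)) (nhds 0) ∧
    ∀ x ∈ X, ∀ z ∈ Sθ ft gt Y 0 x, ∀ θ ∈ Set.Icc 0 θbar,
      Metric.infDist z (Sθ ft gt Y θ x) ≤ ω θ

lemma posPart_continuous {l : ℕ} : Continuous (_root_.posPart (l := l)) :=
  (PiLp.continuous_toLp 2 _).comp
    (continuous_pi fun i => ((continuous_apply i).comp (PiLp.continuous_ofLp 2 _)).max continuous_const)

lemma posPart_norm_zero_iff {l : ℕ} (v : En l) : ‖_root_.posPart v‖ ≤ 0 ↔ ∀ i, v i ≤ 0 := by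
  rw [norm_le_zero_iff]
  constructor
  · intro h i
    have h2 : max (v i) 0 = 0 := congrArg (fun w : En l => w i) h
    exact h2 ▸ le_max_left _ _
  · intro h
    ext i
    exact max_eq_right (h i)
theorem stmt11 {n m l : ℕ} (hn : 0 < n) (hm : 0 < m) (hl : 0 < l)
    (X : Set (En n)) (Y : Set (En m))
    (hXne : X.Nonempty) (hXcpt : IsCompact X)
    (hYne : Y.Nonempty) (hYcpt : IsCompact Y) (hYconv : Convex ℝ Y)
    (f ft : En n × En m → ℝ) (gt : En n × En m → En l)
    (hfc : ContinuousOn f (X ×ˢ Y)) (hftc : ContinuousOn ft (X ×ˢ Y))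
    (hgtc : ContinuousOn gt (X ×ˢ Y))
    (hftconv : ∀ x ∈ X, ConvexOn ℝ Y fun z => ft (x, z))
    (hgtconv : ∀ x ∈ X, ∀ i, ConvexOn ℝ Y fun z => gt (x, z) i)
    (hfeas : ∀ x ∈ X, ∃ z ∈ Y, ∀ i, gt (x, z) i ≤ 0)
    (Lf : ℝ) (hLf : 0 ≤ Lf) (hLipf : LipOnXY f Lf X Y)
    -- `f̃*_hi` is finite
    (hbdd : BddAbove {v | ∃ x ∈ X, v = ftStar ft gt Y x})
    (θbar : ℝ) (ω : ℝ → ℝ) (herr : ErrorBound ft gt X Y θbar ω)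
    (μ : ℝ) (hμpos : 0 < μ)
    (hμbig : (ftStarHi ft gt X Y - ftLow ft X Y) / θbar ^ 2 ≤ μ)
    -- the penalized bilevel problem attains its optimal value `f*_μ` at a feasible point
    (xstar : En n) (ystar : En m) (hxstar : xstar ∈ X) (hystar : ystar ∈ Y)
    (hopt1 : Ptilde ft gt μ xstar ystar = PtildeMinVal ft gt Y μ xstar)
    (hopt2 : f (xstar, ystar) = fStarMu f ft gt X Y μ)
    (ρ ε : ℝ) (hρ : 0 < ρ) (hε : 0 < ε)
    (xe : En n) (ye ze : En m) (hxe : xe ∈ X) (hye : ye ∈ Y) (hze : ze ∈ Y)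
    (heps : epsOptimalc f ft gt X Y ρ μ ε xe ye ze) :
    f (xe, ye) ≤ fStarC f ft gt X Y +
        Lf * ω (Real.sqrt (μ⁻¹ * (ftStarHi ft gt X Y - ftLow ft X Y))) + 2 * ε ∧
    ft (xe, ye) ≤ ftStar ft gt Y xe +
        ρ⁻¹ * (fStarC f ft gt X Y - fLow f X Y +
          Lf * ω (Real.sqrt (μ⁻¹ * (ftStarHi ft gt X Y - ftLow ft X Y))) + 2 * ε) ∧
    ‖posPart (gt (xe, ye))‖ ^ 2 ≤
        μ⁻¹ * (ftStar ft gt Y xe - ftLow ft X Y +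
          ρ⁻¹ * (fStarC f ft gt X Y - fLow f X Y +
            Lf * ω (Real.sqrt (μ⁻¹ * (ftStarHi ft gt X Y - ftLow ft X Y))) + 2 * ε)) := by
  obtain ⟨hθbarpos, hω0, hωmono, -, hEB⟩ := herr
  obtain ⟨he1, he2⟩ := heps
  set D := ftStarHi ft gt X Y - ftLow ft X Y with hD
  set θ : ℝ := Real.sqrt (μ⁻¹ * D) with hθ
  have hθnn : 0 ≤ θ := Real.sqrt_nonneg _
  -- compactness bounds
  have hKcpt : IsCompact (X ×ˢ Y) := hXcpt.prod hYcpt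
  have hKne : (X ×ˢ Y).Nonempty := hXne.prod hYne
  obtain ⟨pf, hpf, hpfmin⟩ := hKcpt.exists_isMinOn hKne hfc
  obtain ⟨pt, hpt, hptmin⟩ := hKcpt.exists_isMinOn hKne hftc
  set Cf := f pf with hCfdef
  set Cft := ft pt with hCftdef
  have hCf : ∀ x ∈ X, ∀ y ∈ Y, Cf ≤ f (x, y) := fun x hx y hy =>
    hpfmin (Set.mk_mem_prod hx hy)
  have hCft : ∀ x ∈ X, ∀ y ∈ Y, Cft ≤ ft (x, y) := fun x hx y hy =>
    hptmin (Set.mk_mem_prod hx hy)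
  have hftLow_le : ∀ x ∈ X, ∀ y ∈ Y, ftLow ft X Y ≤ ft (x, y) := by
    intro x hx y hy
    apply csInf_le
    · refine ⟨Cft, ?_⟩
      rintro w ⟨a, ha, b, hb, rfl⟩
      exact hCft a ha b hb
    · exact ⟨x, hx, y, hy, rfl⟩
  have hfLow_le : ∀ x ∈ X, ∀ y ∈ Y, fLow f X Y ≤ f (x, y) := by
    intro x hx y hy
    apply csInf_le
    · refine ⟨Cf, ?_⟩
      rintro w ⟨a, ha, b, hb, rfl⟩
      exact hCf a ha b hb
    · exact ⟨x, hx, y, hy, rfl⟩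
  -- slices are continuous
  have hslice : ∀ (φ : En n × En m → ℝ), ContinuousOn φ (X ×ˢ Y) → ∀ x ∈ X,
      ContinuousOn (fun z => φ (x, z)) Y := fun φ hφ x hx =>
    hφ.comp ((continuous_const.prodMk continuous_id).continuousOn)
      (fun z hz => Set.mk_mem_prod hx hz)
  have hgslice : ∀ x ∈ X, ContinuousOn (fun z => ‖_root_.posPart (gt (x, z))‖) Y := by
    intro x hx
    have h1 : ContinuousOn (fun z => gt (x, z)) Y :=
      hgtc.comp ((continuous_const.prodMk continuous_id).continuousOn)
        (fun z hz => Set.mk_mem_prod hx hz)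
    exact (posPart_continuous.comp_continuousOn h1).norm
  have hPtslice : ∀ x ∈ X, ContinuousOn (fun z => Ptilde ft gt μ x z) Y := by
    intro x hx
    simp only [Ptilde]
    exact (hslice ft hftc x hx).add (continuousOn_const.mul ((hgslice x hx).pow 2))
  -- lower bound for the penalty function
  have hPt_lo : ∀ x ∈ X, ∀ z ∈ Y, Cft ≤ Ptilde ft gt μ x z := by
    intro x hx z hz
    have h1 := hCft x hx z hz
    have h2 : 0 ≤ μ * ‖_root_.posPart (gt (x, z))‖ ^ 2 := by positivity
    simp only [Ptilde]; linarith
  -- attainment of the lower-level optimum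
  have hstar : ∀ x ∈ X, ∃ z ∈ Y, (∀ i, gt (x, z) i ≤ 0) ∧ ft (x, z) = ftStar ft gt Y x := by
    intro x hx
    have hgx : ContinuousOn (fun z => gt (x, z)) Y :=
      hgtc.comp ((continuous_const.prodMk continuous_id).continuousOn)
        (fun z hz => Set.mk_mem_prod hx hz)
    have htcl : IsClosed {v : En l | ∀ i, v i ≤ 0} := by
      have : {v : En l | ∀ i, v i ≤ 0} = ⋂ i, {v : En l | v i ≤ 0} := by
        ext v; simp
      rw [this]
      exact isClosed_iInter fun i =>
        isClosed_le (EuclideanSpace.proj (𝕜 := ℝ) i).continuous continuous_const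
    have hFclosed : IsClosed (Y ∩ (fun z => gt (x, z)) ⁻¹' {v | ∀ i, v i ≤ 0}) :=
      hgx.preimage_isClosed_of_isClosed hYcpt.isClosed htcl
    have hFcpt : IsCompact (Y ∩ (fun z => gt (x, z)) ⁻¹' {v | ∀ i, v i ≤ 0}) :=
      hYcpt.of_isClosed_subset hFclosed Set.inter_subset_left
    obtain ⟨z0, hz0⟩ := hfeas x hx
    have hFne : (Y ∩ (fun z => gt (x, z)) ⁻¹' {v | ∀ i, v i ≤ 0}).Nonempty :=
      ⟨z0, hz0.1, hz0.2⟩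
    obtain ⟨z₀, hz₀F, hz₀min⟩ := hFcpt.exists_isMinOn hFne
      ((hslice ft hftc x hx).mono Set.inter_subset_left)
    refine ⟨z₀, hz₀F.1, hz₀F.2, ?_⟩
    symm
    apply IsLeast.csInf_eq
    refine ⟨⟨z₀, hz₀F.1, hz₀F.2, rfl⟩, ?_⟩
    rintro w ⟨z, hzY, hzf, rfl⟩
    exact hz₀min ⟨hzY, hzf⟩
  -- θ ≤ θbar
  have hθle : θ ≤ θbar := by
    have h1 : D ≤ μ * θbar ^ 2 := by
      have h2 := (div_le_iff₀ (by positivity : (0:ℝ) < θbar ^ 2)).mp hμbig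
      linarith
    have h3 : μ⁻¹ * D ≤ θbar ^ 2 := by
      calc μ⁻¹ * D ≤ μ⁻¹ * (μ * θbar ^ 2) :=
            mul_le_mul_of_nonneg_left h1 (by positivity)
        _ = θbar ^ 2 := by field_simp
    calc θ ≤ Real.sqrt (θbar ^ 2) := Real.sqrt_le_sqrt h3
      _ = θbar := Real.sqrt_sq hθbarpos.le
  -- ############ KEY LEMMA ############
  have key : ∀ x ∈ X, ∀ y ∈ Y, (∀ i, gt (x, y) i ≤ 0) → ft (x, y) = ftStar ft gt Y x →
      ∃ z ∈ Y, Ptilde ft gt μ x z = PtildeMinVal ft gt Y μ x ∧ dist y z ≤ ω θ := by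
    intro x hx y hy hyfeas hyval
    obtain ⟨yt, hytY, hytmin⟩ := hYcpt.exists_isMinOn hYne (hPtslice x hx)
    have hminval : PtildeMinVal ft gt Y μ x = Ptilde ft gt μ x yt := by
      apply IsLeast.csInf_eq
      refine ⟨⟨yt, hytY, rfl⟩, ?_⟩
      rintro w ⟨z, hz, rfl⟩
      exact hytmin hz
    set θ' := ‖_root_.posPart (gt (x, yt))‖ with hθ'def
    have hθ'nn : 0 ≤ θ' := norm_nonneg _
    have hppy : ‖_root_.posPart (gt (x, y))‖ = 0 :=
      le_antisymm ((posPart_norm_zero_iff _).2 hyfeas) (norm_nonneg _)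
    have hPty : Ptilde ft gt μ x y = ftStar ft gt Y x := by
      simp [Ptilde, hppy, hyval]
    have h1 : Ptilde ft gt μ x yt ≤ ftStar ft gt Y x := hPty ▸ hytmin hy
    have h2 : ftLow ft X Y ≤ ft (x, yt) := hftLow_le x hx yt hytY
    have h3 : ftStar ft gt Y x ≤ ftStarHi ft gt X Y := le_csSup hbdd ⟨x, hx, rfl⟩
    have hθ'sq : θ' ^ 2 ≤ μ⁻¹ * D := by
      have h4 : μ * θ' ^ 2 ≤ D := by
        have h5 : ft (x, yt) + μ * θ' ^ 2 = Ptilde ft gt μ x yt := rfl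
        rw [hD]; linarith
      calc θ' ^ 2 = μ⁻¹ * (μ * θ' ^ 2) := by field_simp
        _ ≤ μ⁻¹ * D := mul_le_mul_of_nonneg_left h4 (by positivity)
    have hθ'θ : θ' ≤ θ := by
      rw [hθ, ← Real.sqrt_sq hθ'nn]
      exact Real.sqrt_le_sqrt hθ'sq
    have hθ'bar : θ' ≤ θbar := le_trans hθ'θ hθle
    -- the θ'-relaxed feasible set
    have hTclosed : IsClosed (Y ∩ (fun z => ‖_root_.posPart (gt (x, z))‖) ⁻¹' Set.Iic θ') :=
      (hgslice x hx).preimage_isClosed_of_isClosed hYcpt.isClosed isClosed_Iic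
    have hTcpt : IsCompact (Y ∩ (fun z => ‖_root_.posPart (gt (x, z))‖) ⁻¹' Set.Iic θ') :=
      hYcpt.of_isClosed_subset hTclosed Set.inter_subset_left
    have hTne : (Y ∩ (fun z => ‖_root_.posPart (gt (x, z))‖) ⁻¹' Set.Iic θ').Nonempty :=
      ⟨yt, hytY, le_refl θ'⟩
    obtain ⟨z₁, hz₁T, hz₁min⟩ := hTcpt.exists_isMinOn hTne
      ((hslice ft hftc x hx).mono Set.inter_subset_left)
    have hz₁S : z₁ ∈ Sθ ft gt Y θ' x := by
      refine ⟨hz₁T.1, hz₁T.2, ?_⟩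
      symm
      apply IsLeast.csInf_eq
      refine ⟨⟨z₁, hz₁T.1, hz₁T.2, rfl⟩, ?_⟩
      rintro w ⟨z', hz', hz'2, rfl⟩
      exact hz₁min ⟨hz', hz'2⟩
    -- y ∈ S₀
    have hyS0 : y ∈ Sθ ft gt Y 0 x := by
      refine ⟨hy, le_of_eq hppy, ?_⟩
      rw [hyval, ftStar]
      congr 1
      ext w
      constructor
      · rintro ⟨z, hz, hf', rfl⟩
        exact ⟨z, hz, (posPart_norm_zero_iff _).2 hf', rfl⟩
      · rintro ⟨z, hz, hle, rfl⟩
        exact ⟨z, hz, (posPart_norm_zero_iff _).1 hle, rfl⟩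
    -- Sθ' is compact
    have hSclosed : IsClosed (Sθ ft gt Y θ' x) := by
      have h5 : Sθ ft gt Y θ' x =
          (Y ∩ (fun z => ‖_root_.posPart (gt (x, z))‖) ⁻¹' Set.Iic θ') ∩
          (Y ∩ (fun z => ft (x, z)) ⁻¹'
            {sInf {w | ∃ z' ∈ Y, ‖_root_.posPart (gt (x, z'))‖ ≤ θ' ∧ w = ft (x, z')}}) := by
        ext z
        simp only [Sθ, Set.mem_setOf_eq, Set.mem_inter_iff, Set.mem_preimage,
          Set.mem_singleton_iff, Set.mem_Iic]
        tauto
      rw [h5]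
      exact hTclosed.inter
        ((hslice ft hftc x hx).preimage_isClosed_of_isClosed hYcpt.isClosed isClosed_singleton)
    have hScpt : IsCompact (Sθ ft gt Y θ' x) :=
      hYcpt.of_isClosed_subset hSclosed (fun z hz => hz.1)
    obtain ⟨z, hzS, hzdist⟩ := hScpt.exists_infDist_eq_dist ⟨z₁, hz₁S⟩ y
    have hdist : dist y z ≤ ω θ' := by
      rw [← hzdist]
      exact hEB x hx y hyS0 θ' ⟨hθ'nn, hθ'bar⟩
    have hzY : z ∈ Y := hzS.1
    have hftz : ft (x, z) ≤ ft (x, yt) := by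
      rw [hzS.2.2]
      apply csInf_le
      · refine ⟨Cft, ?_⟩
        rintro w ⟨z', hz', -, rfl⟩
        exact hCft x hx z' hz'
      · exact ⟨yt, hytY, le_refl _, rfl⟩
    have hzmin : Ptilde ft gt μ x z = PtildeMinVal ft gt Y μ x := by
      rw [hminval]
      refine le_antisymm ?_ (hytmin hzY)
      have h7 : ‖_root_.posPart (gt (x, z))‖ ^ 2 ≤ θ' ^ 2 :=
        pow_le_pow_left₀ (norm_nonneg _) hzS.2.1 2
      have h8 : μ * ‖_root_.posPart (gt (x, z))‖ ^ 2 ≤ μ * θ' ^ 2 :=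
        mul_le_mul_of_nonneg_left h7 hμpos.le
      rw [hθ'def] at h8
      simp only [Ptilde]
      linarith
    exact ⟨z, hzY, hzmin, le_trans hdist (hωmono θ' θ hθ'nn hθ'θ)⟩
  -- ############ f*_μ ≤ f* + Lf ω(θ) ############
  have hCne : {v | ∃ x ∈ X, ∃ y ∈ Y,
      (∀ i, gt (x, y) i ≤ 0) ∧ ft (x, y) = ftStar ft gt Y x ∧ v = f (x, y)}.Nonempty := by
    obtain ⟨x, hx⟩ := hXne
    obtain ⟨z₀, hz₀Y, hz₀f, hz₀v⟩ := hstar x hx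
    exact ⟨f (x, z₀), x, hx, z₀, hz₀Y, hz₀f, hz₀v, rfl⟩
  have hmu_le : fStarMu f ft gt X Y μ ≤ fStarC f ft gt X Y + Lf * ω θ := by
    have h13 : fStarMu f ft gt X Y μ - Lf * ω θ ≤ fStarC f ft gt X Y := by
      apply le_csInf hCne
      rintro v ⟨x, hx, y, hy, hfeas', hval', rfl⟩
      obtain ⟨z, hzY, hzmin, hzd⟩ := key x hx y hy hfeas' hval'
      have h9 : fStarMu f ft gt X Y μ ≤ f (x, z) := by
        apply csInf_le
        · refine ⟨Cf, ?_⟩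
          rintro w ⟨a, ha, b, hb, -, rfl⟩
          exact hCf a ha b hb
        · exact ⟨x, hx, z, hzY, hzmin, rfl⟩
      have h10 : |f (x, z) - f (x, y)| ≤ Lf * dist y z := by
        have h11 := hLipf (x, z) (Set.mk_mem_prod hx hzY) (x, y) (Set.mk_mem_prod hx hy)
        have hpd : prodDist (x, z) (x, y) = dist y z := by
          simp only [prodDist, sub_self, norm_zero]
          rw [zero_pow (two_ne_zero), zero_add, Real.sqrt_sq (norm_nonneg _),
            dist_comm, dist_eq_norm]
        rwa [hpd] at h11
      have h11 : Lf * dist y z ≤ Lf * ω θ := mul_le_mul_of_nonneg_left hzd hLf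
      have h12 := abs_le.1 h10
      linarith
    linarith
  -- ############ the ε-optimality chain ############
  have hbddAe : BddAbove {v | ∃ z ∈ Y, v = Prhomu f ft gt ρ μ xe ye z} := by
    refine ⟨f (xe, ye) + ρ * (Ptilde ft gt μ xe ye - Cft), ?_⟩
    rintro w ⟨z, hz, rfl⟩
    have h1 := hPt_lo xe hxe z hz
    simp only [Prhomu]
    nlinarith
  have hA1 : f (xe, ye) ≤ maxPc f ft gt Y ρ μ xe ye := by
    apply le_csSup hbddAe
    exact ⟨ye, hye, by simp [Prhomu]⟩
  have hA3 : minimaxValc f ft gt X Y ρ μ ≤ f (xstar, ystar) := by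
    have hb : BddBelow {v | ∃ x ∈ X, ∃ y ∈ Y, v = maxPc f ft gt Y ρ μ x y} := by
      refine ⟨Cf, ?_⟩
      rintro w ⟨x, hx, y, hy, rfl⟩
      have hbA : BddAbove {v | ∃ z ∈ Y, v = Prhomu f ft gt ρ μ x y z} := by
        refine ⟨f (x, y) + ρ * (Ptilde ft gt μ x y - Cft), ?_⟩
        rintro w ⟨z, hz, rfl⟩
        have h1 := hPt_lo x hx z hz
        simp only [Prhomu]
        nlinarith
      calc Cf ≤ f (x, y) := hCf x hx y hy
        _ ≤ maxPc f ft gt Y ρ μ x y := le_csSup hbA ⟨y, hy, by simp [Prhomu]⟩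
    have hle : maxPc f ft gt Y ρ μ xstar ystar ≤ f (xstar, ystar) := by
      refine csSup_le ⟨Prhomu f ft gt ρ μ xstar ystar ystar, ystar, hystar, rfl⟩ ?_
      rintro v ⟨z, hz, rfl⟩
      have h1 : PtildeMinVal ft gt Y μ xstar ≤ Ptilde ft gt μ xstar z := by
        apply csInf_le
        · refine ⟨Cft, ?_⟩
          rintro w ⟨z', hz', rfl⟩
          exact hPt_lo xstar hxstar z' hz'
        · exact ⟨z, hz, rfl⟩
      simp only [Prhomu]
      nlinarith [hopt1]
    calc minimaxValc f ft gt X Y ρ μ ≤ maxPc f ft gt Y ρ μ xstar ystar :=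
          csInf_le hb ⟨xstar, hxstar, ystar, hystar, rfl⟩
      _ ≤ f (xstar, ystar) := hle
  have hAbound : maxPc f ft gt Y ρ μ xe ye ≤ fStarC f ft gt X Y + Lf * ω θ + 2 * ε := by
    have := hopt2
    linarith
  obtain ⟨z₀, hz₀Y, hz₀f, hz₀v⟩ := hstar xe hxe
  have hpp0 : ‖_root_.posPart (gt (xe, z₀))‖ = 0 :=
    le_antisymm ((posPart_norm_zero_iff _).2 hz₀f) (norm_nonneg _)
  have hPz₀ : Ptilde ft gt μ xe z₀ = ftStar ft gt Y xe := by
    simp [Ptilde, hpp0, hz₀v]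
  have hP0 : Prhomu f ft gt ρ μ xe ye z₀ ≤ maxPc f ft gt Y ρ μ xe ye :=
    le_csSup hbddAe ⟨z₀, hz₀Y, rfl⟩
  have hP0' : f (xe, ye) + ρ * (Ptilde ft gt μ xe ye - ftStar ft gt Y xe) ≤
      fStarC f ft gt X Y + Lf * ω θ + 2 * ε := by
    have h1 : Prhomu f ft gt ρ μ xe ye z₀ =
        f (xe, ye) + ρ * (Ptilde ft gt μ xe ye - ftStar ft gt Y xe) := by
      simp [Prhomu, hPz₀]
    linarith
  have hflow := hfLow_le xe hxe ye hye
  have hmain : Ptilde ft gt μ xe ye - ftStar ft gt Y xe ≤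
      ρ⁻¹ * (fStarC f ft gt X Y - fLow f X Y + Lf * ω θ + 2 * ε) := by
    rw [inv_mul_eq_div, le_div_iff₀ hρ]
    have h2 : ρ * (Ptilde ft gt μ xe ye - ftStar ft gt Y xe) ≤
        fStarC f ft gt X Y - fLow f X Y + Lf * ω θ + 2 * ε := by linarith
    linarith [h2, mul_comm ρ (Ptilde ft gt μ xe ye - ftStar ft gt Y xe)]
  have hpen : 0 ≤ μ * ‖_root_.posPart (gt (xe, ye))‖ ^ 2 := by positivity
  have hPd : Ptilde ft gt μ xe ye = ft (xe, ye) + μ * ‖_root_.posPart (gt (xe, ye))‖ ^ 2 := rfl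
  have hftlow := hftLow_le xe hxe ye hye
  refine ⟨by linarith, by linarith, ?_⟩
  have h2 : μ * ‖_root_.posPart (gt (xe, ye))‖ ^ 2 ≤
      ftStar ft gt Y xe - ftLow ft X Y +
        ρ⁻¹ * (fStarC f ft gt X Y - fLow f X Y + Lf * ω θ + 2 * ε) := by
    linarith
  calc ‖_root_.posPart (gt (xe, ye))‖ ^ 2
      = μ⁻¹ * (μ * ‖_root_.posPart (gt (xe, ye))‖ ^ 2) := by field_simp
    _ ≤ _ := mul_le_mul_of_nonneg_left h2 (by positivity)
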